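/- Let F be a finite forest and α : V(F) → ℕ. Suppose that the clan graph F^α has a connected component T that is connected and bipartite with bipartition parts of sizes r+2 and r for some r ≥ 1, that the two-variable chromatic symmetric function of every other connected component of F^α is 2-s-positive, and that X_F^α(x_1,x_2) is not 2-s-positive. Then F^α has no isolated vertices. -/

import Mathlib

/-- The clan graph `G^α`: each vertex `v` of `G` is replaced by a clique on `α v`
vertices (the clique of `v`), and every vertex of the clique of `u` is adjacent to
every vertex of the clique of `v` whenever `uv ∈ E(G)`. -/
def clanGraph {V : Type} (G : SimpleGraph V) (α : V → ℕ) :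
    SimpleGraph (Σ v : V, Fin (α v)) where
  Adj a b := (a.1 = b.1 ∧ a ≠ b) ∨ G.Adj a.1 b.1
  symm := by
    constructor
    rintro a b (⟨h1, h2⟩ | h)
    · exact Or.inl ⟨h1.symm, h2.symm⟩
    · exact Or.inr h.symm
  loopless := by
    constructor
    rintro a (⟨-, h⟩ | h)
    · exact h rfl
    · exact G.loopless.irrefl a.1 h

/-- A proper multicoloring of type `α` with colors in `{1,2}` (here `Fin 2`): each
vertex `v` gets a set `κ v` of colors with `|κ v| = α v`, and adjacent vertices get
disjoint color sets. -/
def ProperMulti {V : Type} (G : SimpleGraph V) (α : V → ℕ)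
    (κ : V → Finset (Fin 2)) : Prop :=
  (∀ v, (κ v).card = α v) ∧ ∀ u v, G.Adj u v → κ u ∩ κ v = ∅

/-- The two-variable polynomial `X_G^α(x₁,x₂) = Σ_κ x₁^{a₁(κ)} x₂^{a₂(κ)}`, summed
over all proper multicolorings `κ` of type `α` with colors in `{1,2}`, where
`a_i(κ)` is the number of vertices whose color set contains `i`.  (This is the
two-variable specialization of Stanley's normalized chromatic symmetric function.) -/
noncomputable def Xpoly {V : Type} [Fintype V] (G : SimpleGraph V) (α : V → ℕ) :
    MvPolynomial (Fin 2) ℤ :=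
  ∑ᶠ κ : {κ : V → Finset (Fin 2) // ProperMulti G α κ},
    (MvPolynomial.X 0) ^ (Finset.univ.filter fun v => (0 : Fin 2) ∈ κ.1 v).card *
      (MvPolynomial.X 1) ^ (Finset.univ.filter fun v => (1 : Fin 2) ∈ κ.1 v).card

/-- The two-row Schur coefficient `c_{(k,l)}(f) = [x₁^k x₂^l] f − [x₁^{k+1} x₂^{l-1}] f`
of a polynomial in two variables, the second term being read as `0` when `l = 0`. -/
noncomputable def schurCoeff (f : MvPolynomial (Fin 2) ℤ) (k l : ℕ) : ℤ :=
  MvPolynomial.coeff (Finsupp.single 0 k + Finsupp.single 1 l) f -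
    if l = 0 then 0
    else MvPolynomial.coeff (Finsupp.single 0 (k + 1) + Finsupp.single 1 (l - 1)) f

/-- A polynomial in two variables is 2-s-positive if all its two-row Schur
coefficients `c_{(k,l)}`, for `k ≥ l ≥ 0`, are nonnegative. -/
def TwoSPos (f : MvPolynomial (Fin 2) ℤ) : Prop :=
  ∀ k l : ℕ, l ≤ k → 0 ≤ schurCoeff f k l


set_option linter.unusedSectionVars false
set_option linter.unusedVariables false
set_option maxHeartbeats 1000000

namespace ClanAux
open MvPolynomial Finset

noncomputable def mono (k l : ℕ) : Fin 2 →₀ ℕ := Finsupp.single 0 k + Finsupp.single 1 l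

noncomputable def cc (f : MvPolynomial (Fin 2) ℤ) (k l : ℕ) : ℤ := f.coeff (mono k l)

lemma mono_apply0 (k l : ℕ) : mono k l 0 = k := by simp [mono]
lemma mono_apply1 (k l : ℕ) : mono k l 1 = l := by
  simp [mono, Finsupp.single_apply]

lemma mono_inj {k l k' l' : ℕ} (h : mono k l = mono k' l') : k = k' ∧ l = l' := by
  constructor
  · have := congrArg (fun m => m 0) h; simpa [mono_apply0] using this
  · have := congrArg (fun m => m 1) h; simpa [mono_apply1] using this

lemma schurCoeff_eq (f : MvPolynomial (Fin 2) ℤ) (k l : ℕ) :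
    schurCoeff f k l = cc f k l - if l = 0 then 0 else cc f (k+1) (l-1) := rfl

lemma schurCoeff_add (f g : MvPolynomial (Fin 2) ℤ) (k l : ℕ) :
    schurCoeff (f + g) k l = schurCoeff f k l + schurCoeff g k l := by
  simp only [schurCoeff, MvPolynomial.coeff_add]
  split <;> ring

def Sym (f : MvPolynomial (Fin 2) ℤ) : Prop := ∀ k l, cc f k l = cc f l k

lemma cc_add (f g : MvPolynomial (Fin 2) ℤ) (k l : ℕ) :
    cc (f + g) k l = cc f k l + cc g k l := MvPolynomial.coeff_add _ _ _

lemma Sym.add {f g : MvPolynomial (Fin 2) ℤ} (hf : Sym f) (hg : Sym g) : Sym (f + g) := by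
  intro k l
  rw [cc_add, cc_add, hf k l, hg k l]

lemma TwoSPos.add {f g : MvPolynomial (Fin 2) ℤ} (hf : TwoSPos f) (hg : TwoSPos g) :
    TwoSPos (f + g) := by
  intro k l h
  rw [schurCoeff_add]
  exact add_nonneg (hf k l h) (hg k l h)

lemma cc_mul_X0 (f : MvPolynomial (Fin 2) ℤ) (k l : ℕ) :
    cc (f * X 0) k l = if k = 0 then 0 else cc f (k-1) l := by
  rcases k with _ | k
  · simp only [if_pos rfl]
    rw [cc, MvPolynomial.coeff_mul_X']
    have : (0 : Fin 2) ∉ (mono 0 l).support := by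
      simp [Finsupp.mem_support_iff, mono_apply0]
    simp [this]
  · simp only [Nat.succ_ne_zero, if_false, Nat.succ_sub_one]
    have h : mono (k+1) l = mono k l + Finsupp.single 0 1 := by
      simp [mono, Finsupp.single_add]; abel
    rw [cc, h, MvPolynomial.coeff_mul_X]; rfl

lemma cc_mul_X1 (f : MvPolynomial (Fin 2) ℤ) (k l : ℕ) :
    cc (f * X 1) k l = if l = 0 then 0 else cc f k (l-1) := by
  rcases l with _ | l
  · simp only [if_pos rfl]
    rw [cc, MvPolynomial.coeff_mul_X']
    have : (1 : Fin 2) ∉ (mono k 0).support := by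
      simp [Finsupp.mem_support_iff, mono_apply1]
    simp [this]
  · simp only [Nat.succ_ne_zero, if_false, Nat.succ_sub_one]
    have h : mono k (l+1) = mono k l + Finsupp.single 1 1 := by
      simp [mono, Finsupp.single_add]; abel
    rw [cc, h, MvPolynomial.coeff_mul_X]; rfl

lemma cc_mul_s1 (f : MvPolynomial (Fin 2) ℤ) (k l : ℕ) :
    cc (f * (X 0 + X 1)) k l =
      (if k = 0 then 0 else cc f (k-1) l) + (if l = 0 then 0 else cc f k (l-1)) := by
  rw [mul_add, cc_add, cc_mul_X0, cc_mul_X1]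

lemma cc_mul_XY (f : MvPolynomial (Fin 2) ℤ) (k l : ℕ) :
    cc (f * (X 0 * X 1)) k l =
      if k = 0 ∨ l = 0 then 0 else cc f (k-1) (l-1) := by
  rw [← mul_assoc, cc_mul_X1]
  rcases Nat.eq_zero_or_pos l with hl | hl
  · simp [hl]
  · rw [if_neg (by omega), cc_mul_X0]
    rcases Nat.eq_zero_or_pos k with hk | hk
    · simp [hk]
    · rw [if_neg (by omega), if_neg (by omega)]

lemma Sym.mul_s1 {f : MvPolynomial (Fin 2) ℤ} (hf : Sym f) : Sym (f * (X 0 + X 1)) := by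
  intro k l
  rw [cc_mul_s1, cc_mul_s1, hf (k-1) l, hf k (l-1)]
  ring

lemma Sym.mul_XY {f : MvPolynomial (Fin 2) ℤ} (hf : Sym f) : Sym (f * (X 0 * X 1)) := by
  intro k l
  rw [cc_mul_XY, cc_mul_XY, hf (k-1) (l-1)]
  by_cases hk : k = 0 <;> by_cases hl : l = 0 <;> simp [hk, hl]

lemma schur_mul_s1 (f : MvPolynomial (Fin 2) ℤ) (k l : ℕ) (hk : 1 ≤ k) (hl : 1 ≤ l) :
    schurCoeff (f * (X 0 + X 1)) k l =
      cc f (k-1) l - (if l = 1 then 0 else cc f (k+1) (l-2)) := by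
  rw [schurCoeff_eq, if_neg (by omega), cc_mul_s1, cc_mul_s1, if_neg (by omega),
    if_neg (by omega), if_neg (by omega), Nat.add_sub_cancel]
  by_cases h : l = 1
  · rw [if_pos h, if_pos (by omega)]
    subst h
    ring
  · rw [if_neg h, if_neg (by omega), show l-1-1 = l-2 by omega]
    ring

lemma schur_mul_XY (f : MvPolynomial (Fin 2) ℤ) (k l : ℕ) (hk : 1 ≤ k) (hl : 1 ≤ l) :
    schurCoeff (f * (X 0 * X 1)) k l =
      cc f (k-1) (l-1) - (if l = 1 then 0 else cc f k (l-2)) := by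
  rw [schurCoeff_eq, if_neg (by omega), cc_mul_XY, cc_mul_XY, if_neg (by push_neg; omega)]
  by_cases h : l = 1
  · rw [if_pos h, if_pos (Or.inr (by omega))]
  · rw [if_neg h, if_neg (by push_neg; omega), Nat.add_sub_cancel,
      show l-1-1 = l-2 by omega]

lemma TwoSPos.mul_s1 {f : MvPolynomial (Fin 2) ℤ} (hs : Sym f) (hf : TwoSPos f) :
    TwoSPos (f * (X 0 + X 1)) := by
  intro k l hlk
  rcases Nat.eq_zero_or_pos l with hl | hl
  · subst hl
    rw [schurCoeff_eq, if_pos rfl, sub_zero, cc_mul_s1, if_pos rfl, add_zero]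
    rcases Nat.eq_zero_or_pos k with hk | hk
    · simp [hk]
    · rw [if_neg (by omega)]
      have := hf (k-1) 0 (by omega)
      rwa [schurCoeff_eq, if_pos rfl, sub_zero] at this
  · have hk : 1 ≤ k := by omega
    rw [schur_mul_s1 f k l hk hl]
    by_cases h1 : l = 1
    · rw [if_pos h1, sub_zero, h1]
      rcases Nat.lt_or_ge (k-1) 1 with hk1 | hk1
      · have hk0 : k - 1 = 0 := by omega
        rw [hk0, hs 0 1]
        have := hf 1 0 (by omega)
        rwa [schurCoeff_eq, if_pos rfl, sub_zero] at this
      · have h2 := hf (k-1) 1 (by omega)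
        have h3 := hf k 0 (by omega)
        rw [schurCoeff_eq, if_neg one_ne_zero, show (1:ℕ)-1 = 0 from rfl,
          show k-1+1 = k by omega] at h2
        rw [schurCoeff_eq, if_pos rfl, sub_zero] at h3
        linarith
    · rw [if_neg h1]
      have hl2 : 2 ≤ l := by omega
      have hA : (0:ℤ) ≤ cc f (k-1) l - cc f k (l-1) := by
        rcases Nat.lt_or_ge (k-1) l with hkl | hkl
        · have hkeq : l = k := by omega
          subst hkeq
          rw [hs (l-1) l]
          linarith
        · have := hf (k-1) l (by omega)
          rw [schurCoeff_eq, if_neg (by omega), show k-1+1 = k by omega] at this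
          linarith
      have hB : (0:ℤ) ≤ cc f k (l-1) - cc f (k+1) (l-2) := by
        have := hf k (l-1) (by omega)
        rw [schurCoeff_eq, if_neg (by omega), show l-1-1 = l-2 by omega] at this
        linarith
      linarith

lemma TwoSPos.mul_XY {f : MvPolynomial (Fin 2) ℤ} (hf : TwoSPos f) :
    TwoSPos (f * (X 0 * X 1)) := by
  intro k l hlk
  rcases Nat.eq_zero_or_pos l with hl | hl
  · subst hl
    rw [schurCoeff_eq, if_pos rfl, sub_zero, cc_mul_XY, if_pos (Or.inr rfl)]
  · have hk : 1 ≤ k := by omega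
    rw [schur_mul_XY f k l hk hl]
    by_cases h1 : l = 1
    · rw [if_pos h1, sub_zero, h1]
      have := hf (k-1) 0 (by omega)
      rwa [schurCoeff_eq, if_pos rfl, sub_zero] at this
    · rw [if_neg h1]
      have := hf (k-1) (l-1) (by omega)
      rw [schurCoeff_eq, if_neg (by omega), show k-1+1 = k by omega,
        show l-1-1 = l-2 by omega] at this
      linarith

/-- iterated (XY)-multiplication -/
lemma mul_XY_pow {f : MvPolynomial (Fin 2) ℤ} (hs : Sym f) (hf : TwoSPos f) (n : ℕ) :
    Sym (f * (X 0 * X 1)^n) ∧ TwoSPos (f * (X 0 * X 1)^n) := by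
  induction n with
  | zero => simpa using ⟨hs, hf⟩
  | succ n ih =>
    have : f * (X 0 * X 1)^(n+1) = (f * (X 0 * X 1)^n) * (X 0 * X 1) := by ring
    rw [this]
    exact ⟨Sym.mul_XY ih.1, TwoSPos.mul_XY ih.2⟩

noncomputable def term (a b : ℕ) : MvPolynomial (Fin 2) ℤ := X 0 ^ a * X 1 ^ b

lemma term_eq_monomial (a b : ℕ) : term a b = monomial (mono a b) 1 := by
  rw [term, X_pow_eq_monomial, X_pow_eq_monomial, monomial_mul, one_mul, mono]

lemma cc_term (a b k l : ℕ) : cc (term a b) k l = if a = k ∧ b = l then 1 else 0 := by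
  rw [cc, term_eq_monomial, coeff_monomial]
  by_cases h : a = k ∧ b = l
  · rw [if_pos, if_pos h]
    rw [h.1, h.2]
  · rw [if_neg, if_neg h]
    intro hm
    exact h (mono_inj hm)

/-- base: x³+x²y+xy²+y³ -/
noncomputable def B3 : MvPolynomial (Fin 2) ℤ := term 3 0 + term 2 1 + term 1 2 + term 0 3

lemma cc_B3 (k l : ℕ) : cc B3 k l = if k + l = 3 then 1 else 0 := by
  simp only [B3, cc_add, cc_term]
  by_cases h : k + l = 3
  · rw [if_pos h]
    have hk : k ≤ 3 := by omega
    have hll : l ≤ 3 := by omega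
    interval_cases k <;> interval_cases l <;> simp_all
  · rw [if_neg h]
    have h3 : ¬(3 = k ∧ 0 = l) := by omega
    have h2 : ¬(2 = k ∧ 1 = l) := by omega
    have h1 : ¬(1 = k ∧ 2 = l) := by omega
    have h0 : ¬(0 = k ∧ 3 = l) := by omega
    simp [h3, h2, h1, h0]

lemma Sym_B3 : Sym B3 := by
  intro k l
  rw [cc_B3, cc_B3]
  by_cases h : k + l = 3
  · rw [if_pos h, if_pos (by omega)]
  · rw [if_neg h, if_neg (by omega)]

lemma TwoSPos_B3 : TwoSPos B3 := by
  intro k l hlk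
  rcases Nat.eq_zero_or_pos l with hl | hl
  · subst hl
    rw [schurCoeff_eq, if_pos rfl, sub_zero, cc_B3]
    split <;> norm_num
  · rw [schurCoeff_eq, if_neg (by omega), cc_B3, cc_B3]
    have : k + 1 + (l - 1) = k + l := by omega
    rw [this]
    split <;> norm_num


lemma term_uu (u : ℕ) : term u u = (X 0 * X 1)^u := by rw [term, mul_pow]

lemma step_single {f : MvPolynomial (Fin 2) ℤ} (hs : Sym f) (hp : TwoSPos f) (u : ℕ) :
    Sym (f * term u u) ∧ TwoSPos (f * term u u) := by
  rw [term_uu]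
  exact mul_XY_pow hs hp u

lemma pair_succ (q : ℕ) : term (q+1) q + term q (q+1) = (X 0 * X 1)^q * (X 0 + X 1) := by
  simp only [term]
  ring

lemma step_pair {f : MvPolynomial (Fin 2) ℤ} (hs : Sym f) (hp : TwoSPos f) (u q : ℕ)
    (hd : u = q ∨ u = q + 1 ∨ q = u + 1) :
    Sym (f * (term u q + term q u)) ∧ TwoSPos (f * (term u q + term q u)) := by
  rcases hd with h | h | h
  · subst h
    rw [mul_add]
    obtain ⟨s1, p1⟩ := step_single hs hp u
    exact ⟨s1.add s1, TwoSPos.add p1 p1⟩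
  · subst h
    rw [pair_succ, ← mul_assoc]
    obtain ⟨s1, p1⟩ := mul_XY_pow hs hp q
    exact ⟨s1.mul_s1, TwoSPos.mul_s1 s1 p1⟩
  · subst h
    rw [add_comm, pair_succ, ← mul_assoc]
    obtain ⟨s1, p1⟩ := mul_XY_pow hs hp u
    exact ⟨s1.mul_s1, TwoSPos.mul_s1 s1 p1⟩

lemma baseCC (r : ℕ) :
    Sym ((term (r+2) r + term r (r+2)) * (term 1 0 + term 0 1)) ∧
      TwoSPos ((term (r+2) r + term r (r+2)) * (term 1 0 + term 0 1)) := by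
  have hid : (term (r+2) r + term r (r+2)) * (term 1 0 + term 0 1)
      = B3 * (X 0 * X 1)^r := by
    simp only [term, B3]
    ring
  rw [hid]
  exact mul_XY_pow Sym_B3 TwoSPos_B3 r

lemma prod_shape {ι : Type*} (s : Finset ι) (g : ι → MvPolynomial (Fin 2) ℤ)
    (hsh : ∀ c ∈ s, ∃ u q, (u = q ∨ u = q + 1 ∨ q = u + 1) ∧
      (g c = term u q + term q u ∨ g c = term u u))
    {f : MvPolynomial (Fin 2) ℤ} (h1 : Sym f) (h2 : TwoSPos f) :
    Sym (f * ∏ c ∈ s, g c) ∧ TwoSPos (f * ∏ c ∈ s, g c) := by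
  classical
  induction s using Finset.induction_on with
  | empty => simpa using ⟨h1, h2⟩
  | @insert a s hnotmem ih =>
    rw [Finset.prod_insert hnotmem]
    have hrw : f * (g a * ∏ c ∈ s, g c) = (f * ∏ c ∈ s, g c) * g a := by ring
    rw [hrw]
    obtain ⟨s1, p1⟩ := ih (fun c hc => hsh c (Finset.mem_insert_of_mem hc))
    obtain ⟨u, q, hd, hgc⟩ := hsh a (Finset.mem_insert_self a s)
    rcases hgc with h | h
    · rw [h]
      exact step_pair s1 p1 u q hd
    · rw [h]
      exact step_single s1 p1 u

lemma TwoSPos_zero : TwoSPos 0 := by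
  intro k l _
  rw [schurCoeff]
  simp

lemma balance_of_pos {u q : ℕ} (h : TwoSPos (term u q + term q u)) :
    u = q ∨ u = q + 1 ∨ q = u + 1 := by
  by_contra hc
  push_neg at hc
  obtain ⟨h1, h2, h3⟩ := hc
  rcases Nat.lt_or_ge u q with hlt | hge
  · -- q ≥ u + 2
    have hq : u + 2 ≤ q := by omega
    have := h (q-1) (u+1) (by omega)
    rw [schurCoeff_eq, if_neg (by omega)] at this
    have e1 : q - 1 + 1 = q := by omega
    have e2 : u + 1 - 1 = u := by omega
    rw [e1, e2] at this
    have c1 : cc (term u q + term q u) (q-1) (u+1) = 0 := by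
      rw [cc_add, cc_term, cc_term, if_neg (by omega), if_neg (by omega)]
      norm_num
    have c2 : cc (term u q + term q u) q u = 1 := by
      rw [cc_add, cc_term, cc_term, if_neg (by omega), if_pos ⟨rfl, rfl⟩]
      norm_num
    rw [c1, c2] at this
    omega
  · have hu : q + 2 ≤ u := by omega
    have := h (u-1) (q+1) (by omega)
    rw [schurCoeff_eq, if_neg (by omega)] at this
    have e1 : u - 1 + 1 = u := by omega
    have e2 : q + 1 - 1 = q := by omega
    rw [e1, e2] at this
    have c1 : cc (term u q + term q u) (u-1) (q+1) = 0 := by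
      rw [cc_add, cc_term, cc_term, if_neg (by omega), if_neg (by omega)]
      norm_num
    have c2 : cc (term u q + term q u) u q = 1 := by
      rw [cc_add, cc_term, cc_term, if_pos ⟨rfl, rfl⟩, if_neg (by omega)]
      norm_num
    rw [c1, c2] at this
    omega


open Finset SimpleGraph
open scoped Classical

open Finset SimpleGraph
open scoped Classical

/-! ### Fin 2 / flip facts -/

def σc : Fin 2 → Fin 2 := fun c => c + 1

def flipF (s : Finset (Fin 2)) : Finset (Fin 2) := s.image σc

lemma flipF_invol : ∀ s : Finset (Fin 2), flipF (flipF s) = s := by decide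

lemma card_flipF : ∀ s : Finset (Fin 2), (flipF s).card = s.card := by decide

lemma mem_flipF_zero : ∀ s : Finset (Fin 2), ((0 : Fin 2) ∈ flipF s ↔ (1 : Fin 2) ∈ s) := by decide

lemma mem_flipF_one : ∀ s : Finset (Fin 2), ((1 : Fin 2) ∈ flipF s ↔ (0 : Fin 2) ∈ s) := by decide

lemma flipF_disj' : ∀ s t : Finset (Fin 2), s ∩ t = ∅ → flipF s ∩ flipF t = ∅ := by decide
lemma flipF_disj {s t : Finset (Fin 2)} (h : s ∩ t = ∅) : flipF s ∩ flipF t = ∅ :=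
  flipF_disj' s t h

lemma fin2_pair' : ∀ s t : Finset (Fin 2), 1 ≤ s.card → 1 ≤ t.card →
    s ∩ t = ∅ → s.card = 1 ∧ t.card = 1 ∧ t = flipF s := by decide
lemma fin2_pair {s t : Finset (Fin 2)} (hs : 1 ≤ s.card) (ht : 1 ≤ t.card)
    (h : s ∩ t = ∅) : s.card = 1 ∧ t.card = 1 ∧ t = flipF s := fin2_pair' s t hs ht h

lemma fin2_dichot' : ∀ s t : Finset (Fin 2), s.card = t.card → t = s ∨ t = flipF s := by decide
lemma fin2_dichot {s t : Finset (Fin 2)} (h : s.card = t.card) : t = s ∨ t = flipF s :=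
  fin2_dichot' s t h

lemma fin2_card_le : ∀ s : Finset (Fin 2), s.card ≤ 2 := by decide

lemma fin2_univ_of_card' : ∀ s : Finset (Fin 2), s.card = 2 → s = Finset.univ := by decide
lemma fin2_univ_of_card {s : Finset (Fin 2)} (h : s.card = 2) : s = Finset.univ :=
  fin2_univ_of_card' s h

lemma fin2_singleton_inter' : ∀ a b : Fin 2, a ≠ b → ({a} : Finset (Fin 2)) ∩ {b} = ∅ := by decide
lemma fin2_singleton_inter {a b : Fin 2} (h : a ≠ b) :
    ({a} : Finset (Fin 2)) ∩ {b} = ∅ := fin2_singleton_inter' a b h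

lemma fin2_ne_flip : ∀ a : Fin 2, a ≠ σc a := by decide

lemma fin2_of_ne' : ∀ a b : Fin 2, a ≠ b → b = σc a := by decide
lemma fin2_of_ne {a b : Fin 2} (h : a ≠ b) : b = σc a := fin2_of_ne' a b h

lemma flipF_singleton : ∀ a : Fin 2, flipF ({a} : Finset (Fin 2)) = {σc a} := by decide


/-! ### two-colorings of a connected graph -/

lemma propagate1 {U : Type} {H : SimpleGraph U} {κ κ' : U → Finset (Fin 2)}
    (hκ : ProperMulti H (fun _ => 1) κ) (hκ' : ProperMulti H (fun _ => 1) κ')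
    {a b : U} (p : H.Walk a b) :
    (κ' a = κ a → κ' b = κ b) ∧ (κ' a = flipF (κ a) → κ' b = flipF (κ b)) := by
  induction p with
  | nil => exact ⟨id, id⟩
  | @cons a c b h p ih =>
    obtain ⟨-, -, e⟩ := fin2_pair (s := κ a) (t := κ c)
      (by rw [hκ.1 a]) (by rw [hκ.1 c]) (hκ.2 a c h)
    obtain ⟨-, -, e'⟩ := fin2_pair (s := κ' a) (t := κ' c)
      (by rw [hκ'.1 a]) (by rw [hκ'.1 c]) (hκ'.2 a c h)
    refine ⟨fun hh => ih.1 ?_, fun hh => ih.2 ?_⟩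
    · rw [e', hh, e]
    · rw [e', hh, flipF_invol, e, flipF_invol]

/-! ### Clan graph and coloring structure -/

section Graph

variable {V : Type} [Fintype V] [DecidableEq V] (F : SimpleGraph V) (α : V → ℕ)

local notation "W" => (Σ v : V, Fin (α v))
local notation "G" => clanGraph F α

lemma adj_clique {v : V} {i j : Fin (α v)} (h : i ≠ j) :
    (clanGraph F α).Adj ⟨v, i⟩ ⟨v, j⟩ := by
  refine Or.inl ⟨rfl, fun hc => h ?_⟩
  exact eq_of_heq (Sigma.mk.inj_iff.mp hc).2

lemma mk_eq_of_same_v {v : V} (i j : Fin (α v)) :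
    (clanGraph F α).connectedComponentMk ⟨v, i⟩ = (clanGraph F α).connectedComponentMk ⟨v, j⟩ := by
  by_cases h : i = j
  · rw [h]
  · exact ConnectedComponent.connectedComponentMk_eq_of_adj (adj_clique F α h)

variable {F α}

/-- the component a support vertex belongs to -/
lemma edge_flip {κ : V → Finset (Fin 2)} (hκ : ProperMulti F α κ) {u w : V}
    (h : F.Adj u w) (hu : 0 < α u) (hw : 0 < α w) :
    α u = 1 ∧ α w = 1 ∧ κ w = flipF (κ u) := by
  have h1 := hκ.1 u
  have h2 := hκ.1 w
  have hd := hκ.2 u w h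
  obtain ⟨c1, c2, c3⟩ := fin2_pair (s := κ u) (t := κ w) (by omega) (by omega) hd
  exact ⟨by omega, by omega, c3⟩

lemma dichotomy {κ κ' : V → Finset (Fin 2)} (hκ : ProperMulti F α κ)
    (hκ' : ProperMulti F α κ') (v : V) : κ' v = κ v ∨ κ' v = flipF (κ v) :=
  fin2_dichot (by rw [hκ.1 v, hκ'.1 v])

lemma propagate {κ κ' : V → Finset (Fin 2)} (hκ : ProperMulti F α κ)
    (hκ' : ProperMulti F α κ') {a b : W} (p : (clanGraph F α).Walk a b) :
    (κ' a.1 = κ a.1 → κ' b.1 = κ b.1) ∧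
      (κ' a.1 = flipF (κ a.1) → κ' b.1 = flipF (κ b.1)) := by
  induction p with
  | nil => exact ⟨id, id⟩
  | @cons a c b h p ih =>
    rcases h with ⟨h1, -⟩ | h2
    · rw [← h1] at ih
      exact ih
    · have hu : 0 < α a.1 := a.2.pos
      have hw : 0 < α c.1 := c.2.pos
      obtain ⟨-, -, e⟩ := edge_flip hκ h2 hu hw
      obtain ⟨-, -, e'⟩ := edge_flip hκ' h2 hu hw
      refine ⟨fun hh => ih.1 ?_, fun hh => ih.2 ?_⟩
      · rw [e', hh, e]
      · rw [e', hh, flipF_invol, e, flipF_invol]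

def flipK (κ : V → Finset (Fin 2)) : V → Finset (Fin 2) := fun v => flipF (κ v)

lemma flipK_proper {κ : V → Finset (Fin 2)} (hκ : ProperMulti F α κ) :
    ProperMulti F α (flipK κ) := by
  constructor
  · intro v
    rw [flipK, card_flipF, hκ.1 v]
  · intro u v h
    exact flipF_disj (hκ.2 u v h)

variable (α) in
def inC (c : (clanGraph F α).ConnectedComponent) (v : V) : Prop :=
  ∃ i : Fin (α v), (clanGraph F α).connectedComponentMk ⟨v, i⟩ = c

lemma inC_unique {c c' : (clanGraph F α).ConnectedComponent} {v : V}
    (h : inC α c v) (h' : inC α c' v) : c = c' := by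
  obtain ⟨i, hi⟩ := h
  obtain ⟨j, hj⟩ := h'
  rw [← hi, ← hj, mk_eq_of_same_v F α i j]

lemma inC_mk {v : V} (i : Fin (α v)) : inC α ((clanGraph F α).connectedComponentMk ⟨v, i⟩) v :=
  ⟨i, rfl⟩

lemma inC_pos {c : (clanGraph F α).ConnectedComponent} {v : V} (h : inC α c v) : 0 < α v := by
  obtain ⟨i, -⟩ := h
  exact i.pos

lemma adj_inC {u w : V} (h : F.Adj u w) (hu : 0 < α u) (hw : 0 < α w)
    {c : (clanGraph F α).ConnectedComponent} (hc : inC α c u) : inC α c w := by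
  obtain ⟨i, hi⟩ := hc
  refine ⟨⟨0, hw⟩, ?_⟩
  rw [← hi]
  exact ConnectedComponent.connectedComponentMk_eq_of_adj
    (show (clanGraph F α).Adj ⟨w, ⟨0, hw⟩⟩ ⟨u, i⟩ from Or.inr h.symm)

variable (α) in
noncomputable def res (c : (clanGraph F α).ConnectedComponent) (κ : V → Finset (Fin 2)) :
    V → Finset (Fin 2) := fun v => if inC α c v then κ v else ∅

lemma res_apply (c : (clanGraph F α).ConnectedComponent) (κ : V → Finset (Fin 2)) (v : V) :
    res α c κ v = if inC α c v then κ v else ∅ := rfl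

lemma res_flipK (c : (clanGraph F α).ConnectedComponent) (κ : V → Finset (Fin 2)) :
    res α c (flipK κ) = flipK (res α c κ) := by
  funext v
  show (if inC α c v then flipF (κ v) else ∅) = flipF (res α c κ v)
  rw [res_apply]
  split
  · rfl
  · show (∅ : Finset (Fin 2)) = flipF ∅
    rfl

lemma res_cases {κs κ : V → Finset (Fin 2)} (hκs : ProperMulti F α κs)
    (hκ : ProperMulti F α κ) (c : (clanGraph F α).ConnectedComponent) :
    res α c κ = res α c κs ∨ res α c κ = res α c (flipK κs) := by
  obtain ⟨a, ha⟩ := Quot.exists_rep c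
  rcases dichotomy hκs hκ a.1 with h | h
  · left
    funext v
    rw [res_apply, res_apply]
    split
    · rename_i hv
      obtain ⟨i, hi⟩ := hv
      have hr : (clanGraph F α).Reachable a ⟨v, i⟩ := by
        apply ConnectedComponent.exact
        show (clanGraph F α).connectedComponentMk a = _
        rw [hi]; exact ha
      obtain ⟨p⟩ := hr
      exact (propagate hκs hκ p).1 h
    · rfl
  · right
    funext v
    rw [res_apply, res_flipK, flipK, res_apply]
    split
    · rename_i hv
      obtain ⟨i, hi⟩ := hv
      have hr : (clanGraph F α).Reachable a ⟨v, i⟩ := by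
        apply ConnectedComponent.exact
        show (clanGraph F α).connectedComponentMk a = _
        rw [hi]; exact ha
      obtain ⟨p⟩ := hr
      exact (propagate hκs hκ p).2 h
    · rfl

/-! ### Product formula -/

variable (F α) in
noncomputable def KK : Finset (V → Finset (Fin 2)) :=
  Finset.univ.filter (fun κ => ProperMulti F α κ)

lemma mem_KK {κ : V → Finset (Fin 2)} : κ ∈ KK F α ↔ ProperMulti F α κ := by
  rw [KK, Finset.mem_filter]
  simp

noncomputable def wt (t : Fin 2) (κ : V → Finset (Fin 2)) : ℕ :=
  (Finset.univ.filter fun v => t ∈ κ v).card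

lemma Xpoly_eq_sum : Xpoly F α = ∑ κ ∈ KK F α, term (wt 0 κ) (wt 1 κ) := by
  rw [Xpoly, finsum_eq_sum_of_fintype]
  rw [Finset.sum_subtype (KK F α) (fun κ => mem_KK)
    (fun κ => term (wt 0 κ) (wt 1 κ))]
  rfl

variable (F α) in
noncomputable def cOf (v : V) (h : 0 < α v) : (clanGraph F α).ConnectedComponent :=
  (clanGraph F α).connectedComponentMk ⟨v, ⟨0, h⟩⟩

lemma inC_cOf {v : V} (h : 0 < α v) : inC α (cOf F α v h) v := ⟨⟨0, h⟩, rfl⟩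

lemma cOf_eq {v : V} (h : 0 < α v) {c : (clanGraph F α).ConnectedComponent}
    (hc : inC α c v) : cOf F α v h = c := inC_unique (inC_cOf h) hc

variable (F α) in
noncomputable def splice (g : (clanGraph F α).ConnectedComponent → (V → Finset (Fin 2))) :
    V → Finset (Fin 2) :=
  fun v => if h : 0 < α v then g (cOf F α v h) v else ∅

lemma splice_apply (g : (clanGraph F α).ConnectedComponent → (V → Finset (Fin 2))) (v : V) :
    splice F α g v = if h : 0 < α v then g (cOf F α v h) v else ∅ := rfl

lemma mem_splice_iff {g : (clanGraph F α).ConnectedComponent → (V → Finset (Fin 2))}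
    (hg : ∀ c v, ¬ inC α c v → g c v = ∅) (t : Fin 2) (v : V) :
    t ∈ splice F α g v ↔ ∃ c, t ∈ g c v := by
  constructor
  · intro h
    rw [splice_apply] at h
    split at h
    · exact ⟨_, h⟩
    · simp at h
  · rintro ⟨c, hc⟩
    have hin : inC α c v := by
      by_contra hn
      rw [hg c v hn] at hc
      simp at hc
    rw [splice_apply, dif_pos (inC_pos hin), cOf_eq (inC_pos hin) hin]
    exact hc

lemma sum_wt_eq [Fintype (clanGraph F α).ConnectedComponent]
    {g : (clanGraph F α).ConnectedComponent → (V → Finset (Fin 2))}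
    (hg : ∀ c v, ¬ inC α c v → g c v = ∅) (t : Fin 2) :
    ∑ c, wt t (g c) = wt t (splice F α g) := by
  have hdisj : ∀ c ∈ Finset.univ, ∀ c' ∈ Finset.univ, c ≠ c' →
      Disjoint (Finset.univ.filter fun v => t ∈ g c v)
        (Finset.univ.filter fun v => t ∈ g c' v) := by
    intro c _ c' _ hne
    rw [Finset.disjoint_left]
    intro v hv hv'
    rw [Finset.mem_filter] at hv hv'
    have h1 : inC α c v := by
      by_contra hn; rw [hg c v hn] at hv; simp at hv
    have h2 : inC α c' v := by
      by_contra hn; rw [hg c' v hn] at hv'; simp at hv'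
    exact hne (inC_unique h1 h2)
  have := (Finset.card_biUnion hdisj).symm
  rw [wt]
  have hset : (Finset.univ.biUnion fun c => Finset.univ.filter fun v => t ∈ g c v)
      = Finset.univ.filter fun v => t ∈ splice F α g v := by
    ext v
    rw [Finset.mem_biUnion, Finset.mem_filter]
    constructor
    · rintro ⟨c, -, hc⟩
      rw [Finset.mem_filter] at hc
      exact ⟨Finset.mem_univ v, (mem_splice_iff hg t v).2 ⟨c, hc.2⟩⟩
    · rintro ⟨-, h⟩
      obtain ⟨c, hc⟩ := (mem_splice_iff hg t v).1 h
      exact ⟨c, Finset.mem_univ c, Finset.mem_filter.2 ⟨Finset.mem_univ v, hc⟩⟩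
  rw [hset] at this
  rw [← this]
  rfl

lemma splice_proper {g : (clanGraph F α).ConnectedComponent → (V → Finset (Fin 2))}
    (hg : ∀ c, g c ∈ (KK F α).image (res α c)) : ProperMulti F α (splice F α g) := by
  have hg' : ∀ c, ∃ κ, ProperMulti F α κ ∧ g c = res α c κ := by
    intro c
    obtain ⟨κ, hκ, he⟩ := Finset.mem_image.1 (hg c)
    exact ⟨κ, mem_KK.1 hκ, he.symm⟩
  constructor
  · intro v
    rw [splice_apply]
    split
    · rename_i h
      obtain ⟨κ, hκ, he⟩ := hg' (cOf F α v h)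
      rw [he, res_apply, if_pos (inC_cOf h)]
      exact hκ.1 v
    · rename_i h
      simp only [Finset.card_empty]
      omega
  · intro u w h
    by_cases hu : 0 < α u
    · by_cases hw : 0 < α w
      · have hcc : cOf F α u hu = cOf F α w hw := by
          apply cOf_eq
          exact adj_inC h.symm hw hu (inC_cOf hw)
        rw [splice_apply, splice_apply, dif_pos hu, dif_pos hw, ← hcc]
        obtain ⟨κ, hκ, he⟩ := hg' (cOf F α u hu)
        rw [he, res_apply, res_apply, if_pos (inC_cOf hu),
          if_pos (hcc ▸ inC_cOf hw)]
        exact hκ.2 u w h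
      · rw [splice_apply, splice_apply, dif_neg hw, Finset.inter_empty]
    · rw [splice_apply, splice_apply, dif_neg hu, Finset.empty_inter]

lemma res_mem_KK {κ : V → Finset (Fin 2)} (hκ : κ ∈ KK F α)
    (c : (clanGraph F α).ConnectedComponent) : res α c κ ∈ (KK F α).image (res α c) :=
  Finset.mem_image_of_mem _ hκ

lemma splice_res {κ : V → Finset (Fin 2)} (hκ : ProperMulti F α κ) :
    splice F α (fun c => res α c κ) = κ := by
  funext v
  rw [splice_apply]
  split
  · rename_i h
    rw [res_apply, if_pos (inC_cOf h)]
  · rename_i h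
    have := hκ.1 v
    have hz : (κ v).card = 0 := by omega
    rw [Finset.card_eq_zero] at hz
    rw [hz]

lemma res_splice {g : (clanGraph F α).ConnectedComponent → (V → Finset (Fin 2))}
    (hg : ∀ c, g c ∈ (KK F α).image (res α c)) (c : (clanGraph F α).ConnectedComponent) :
    res α c (splice F α g) = g c := by
  obtain ⟨κ, hκ, he⟩ := Finset.mem_image.1 (hg c)
  funext v
  rw [res_apply]
  split
  · rename_i hin
    rw [splice_apply, dif_pos (inC_pos hin), cOf_eq (inC_pos hin) hin]
  · rename_i hn
    rw [← he, res_apply, if_neg hn]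

variable (F α) in
noncomputable def gpoly (c : (clanGraph F α).ConnectedComponent) : MvPolynomial (Fin 2) ℤ :=
  ∑ ρ ∈ (KK F α).image (res α c), term (wt 0 ρ) (wt 1 ρ)

lemma Xpoly_prod [Fintype (clanGraph F α).ConnectedComponent] :
    Xpoly F α = ∏ c, gpoly F α c := by
  rw [Xpoly_eq_sum]
  simp only [gpoly]
  rw [Finset.prod_univ_sum]
  refine Finset.sum_nbij' (fun κ => fun c => res α c κ) (fun g => splice F α g) ?_ ?_ ?_ ?_ ?_
  · intro κ hκ
    rw [Fintype.mem_piFinset]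
    exact fun c => res_mem_KK hκ c
  · intro g hg
    rw [Fintype.mem_piFinset] at hg
    exact mem_KK.2 (splice_proper hg)
  · intro κ hκ
    exact splice_res (mem_KK.1 hκ)
  · intro g hg
    rw [Fintype.mem_piFinset] at hg
    funext c
    exact res_splice hg c
  · intro κ hκ
    have hresv : ∀ (c : (clanGraph F α).ConnectedComponent) v, ¬ inC α c v → res α c κ v = ∅ := by
      intro c v hn
      rw [res_apply, if_neg hn]
    have h0 : ∑ c : (clanGraph F α).ConnectedComponent, wt 0 (res α c κ) = wt 0 κ := by
      rw [sum_wt_eq hresv 0, splice_res (mem_KK.1 hκ)]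
    have h1 : ∑ c : (clanGraph F α).ConnectedComponent, wt 1 (res α c κ) = wt 1 κ := by
      rw [sum_wt_eq hresv 1, splice_res (mem_KK.1 hκ)]
    rw [← h0, ← h1]
    simp only [term]
    rw [Finset.prod_mul_distrib, Finset.prod_pow_eq_pow_sum, Finset.prod_pow_eq_pow_sum]

/-! ### Shape of component polynomials -/

lemma sigma_invol : ∀ a : Fin 2, σc (σc a) = a := by decide

lemma wt_flipK (ρ : V → Finset (Fin 2)) : wt 0 (flipK ρ) = wt 1 ρ ∧ wt 1 (flipK ρ) = wt 0 ρ := by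
  constructor
  · rw [wt, wt]
    congr 1
    apply Finset.filter_congr
    intro v _
    simp only [flipK]
    rw [mem_flipF_zero]
  · rw [wt, wt]
    congr 1
    apply Finset.filter_congr
    intro v _
    simp only [flipK]
    rw [mem_flipF_one]

lemma image_res {κs : V → Finset (Fin 2)} (hκs : κs ∈ KK F α)
    (c : (clanGraph F α).ConnectedComponent) :
    (KK F α).image (res α c) = insert (res α c κs) {res α c (flipK κs)} := by
  ext ρ
  rw [Finset.mem_image, Finset.mem_insert, Finset.mem_singleton]
  constructor
  · rintro ⟨κ, hκ, rfl⟩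
    exact res_cases (mem_KK.1 hκs) (mem_KK.1 hκ) c
  · rintro (rfl | rfl)
    · exact ⟨κs, hκs, rfl⟩
    · exact ⟨flipK κs, mem_KK.2 (flipK_proper (mem_KK.1 hκs)), rfl⟩

lemma gpoly_shape {κs : V → Finset (Fin 2)} (hκs : κs ∈ KK F α)
    (c : (clanGraph F α).ConnectedComponent) :
    gpoly F α c = term (wt 0 (res α c κs)) (wt 1 (res α c κs))
        + term (wt 1 (res α c κs)) (wt 0 (res α c κs)) ∨
    (wt 0 (res α c κs) = wt 1 (res α c κs) ∧
      gpoly F α c = term (wt 0 (res α c κs)) (wt 0 (res α c κs))) := by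
  have hflip := wt_flipK (res α c κs)
  by_cases h : res α c (flipK κs) = res α c κs
  · right
    have hq : wt 0 (res α c κs) = wt 1 (res α c κs) := by
      conv_lhs => rw [← h]
      rw [res_flipK, hflip.1]
    refine ⟨hq, ?_⟩
    rw [gpoly, image_res hκs c, h, Finset.insert_eq_self.2 (Finset.mem_singleton_self _),
      Finset.sum_singleton, hq]
  · left
    rw [gpoly, image_res hκs c, Finset.sum_pair (fun he => h he.symm),
      res_flipK, hflip.1, hflip.2]

/-! ### The canonical clan coloring associated to a multicoloring -/

variable (α) in
noncomputable def chi (κ : V → Finset (Fin 2)) : (Σ v : V, Fin (α v)) → Fin 2 :=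
  fun w => if (w.2 : ℕ) = 0 ∧ (0 : Fin 2) ∈ κ w.1 then 0 else 1

lemma fin2_chi_val : ∀ s : Finset (Fin 2), 1 ≤ s.card →
    (if (0 : Fin 2) ∈ s then (0 : Fin 2) else 1) ∈ s := by decide

lemma chi_mem {κ : V → Finset (Fin 2)} (hκ : ProperMulti F α κ) (w : Σ v : V, Fin (α v)) :
    chi α κ w ∈ κ w.1 := by
  have hcard : (κ w.1).card = α w.1 := hκ.1 w.1
  have hpos : 0 < α w.1 := w.2.pos
  rw [chi]
  by_cases h0 : (w.2 : ℕ) = 0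
  · simp only [h0, true_and]
    exact fin2_chi_val (κ w.1) (by omega)
  · rw [if_neg (by tauto)]
    have h2 : 2 ≤ α w.1 := by
      have := w.2.isLt
      omega
    have hle := fin2_card_le (κ w.1)
    have huniv : κ w.1 = Finset.univ := fin2_univ_of_card (by omega)
    rw [huniv]
    exact Finset.mem_univ 1

lemma chi_proper {κ : V → Finset (Fin 2)} (hκ : ProperMulti F α κ)
    {w w' : Σ v : V, Fin (α v)} (h : (clanGraph F α).Adj w w') :
    chi α κ w ≠ chi α κ w' := by
  rcases h with ⟨h1, h2⟩ | h3
  · -- same clique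
    obtain ⟨v, i⟩ := w
    obtain ⟨v', j⟩ := w'
    simp only at h1
    subst h1
    have hij : (i : ℕ) ≠ (j : ℕ) := by
      intro he
      exact h2 (by rw [Fin.val_eq_val] at he; rw [he])
    have h2' : 2 ≤ α v := by
      have := i.isLt
      have := j.isLt
      omega
    have hle := fin2_card_le (κ v)
    have hcard : (κ v).card = α v := hκ.1 v
    have huniv : κ v = Finset.univ := fin2_univ_of_card (by omega)
    rw [chi, chi]
    simp only [huniv, Finset.mem_univ, and_true]
    rcases Nat.eq_zero_or_pos (i : ℕ) with hi | hi
    · rw [if_pos hi, if_neg (by omega)]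
      exact Fin.zero_ne_one
    · rw [if_neg (by omega)]
      have hj : (j : ℕ) = 0 := by omega
      rw [if_pos hj]
      exact one_ne_zero
  · have := hκ.2 w.1 w'.1 h3
    intro he
    have m1 := chi_mem hκ w
    have m2 := chi_mem hκ w'
    rw [he] at m1
    have : chi α κ w' ∈ κ w.1 ∩ κ w'.1 := Finset.mem_inter.2 ⟨m1, m2⟩
    rw [hκ.2 w.1 w'.1 h3] at this
    simp at this

lemma fin2_cases : ∀ t : Fin 2, t = 0 ∨ t = 1 := by decide

lemma fin2_single_chi : ∀ x : Fin 2,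
    (if (0 : Fin 2) ∈ ({x} : Finset (Fin 2)) then (0 : Fin 2) else 1) = x := by decide

lemma count_fiber {κ : V → Finset (Fin 2)} (hκ : ProperMulti F α κ)
    (c : (clanGraph F α).ConnectedComponent) (t : Fin 2) (v : V) :
    (Finset.univ.filter fun i : Fin (α v) =>
        (clanGraph F α).connectedComponentMk ⟨v, i⟩ = c ∧ chi α κ ⟨v, i⟩ = t).card
      = if t ∈ res α c κ v then 1 else 0 := by
  by_cases hin : inC α c v
  · have hmk : ∀ i : Fin (α v), (clanGraph F α).connectedComponentMk ⟨v, i⟩ = c := by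
      intro i
      obtain ⟨j, hj⟩ := hin
      exact (mk_eq_of_same_v F α i j).trans hj
    have hres : res α c κ v = κ v := by rw [res_apply, if_pos hin]
    rw [hres]
    have hfc : (Finset.univ.filter fun i : Fin (α v) =>
        (clanGraph F α).connectedComponentMk ⟨v, i⟩ = c ∧ chi α κ ⟨v, i⟩ = t)
        = Finset.univ.filter fun i : Fin (α v) => chi α κ ⟨v, i⟩ = t := by
      apply Finset.filter_congr
      intro i _
      simp [hmk i]
    rw [hfc]
    have hpos : 0 < α v := inC_pos hin
    have hcard : (κ v).card = α v := hκ.1 v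
    have hle := fin2_card_le (κ v)
    rcases (by omega : α v = 1 ∨ α v = 2) with h1 | h2
    · obtain ⟨a, ha⟩ := Finset.card_eq_one.1
        (show (Finset.univ : Finset (Fin (α v))).card = 1 by simp [h1])
      obtain ⟨x, hx⟩ := Finset.card_eq_one.1 (show (κ v).card = 1 by omega)
      have hav : (a : ℕ) = 0 := by
        have := a.isLt
        omega
      have hchi : chi α κ ⟨v, a⟩ = x := by
        rw [chi]
        simp only [hav, true_and, hx]
        exact fin2_single_chi x
      rw [ha, Finset.filter_singleton, hchi, hx]
      by_cases hxt : x = t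
      · rw [if_pos hxt, if_pos (Finset.mem_singleton.2 hxt.symm), Finset.card_singleton]
      · rw [if_neg hxt, if_neg (fun h => hxt (Finset.mem_singleton.1 h).symm),
          Finset.card_empty]
    · have huniv : κ v = Finset.univ := fin2_univ_of_card (by omega)
      have hval : ∀ i : Fin (α v), chi α κ ⟨v, i⟩ = if (i : ℕ) = 0 then 0 else 1 := by
        intro i
        rw [chi]
        by_cases h : (i : ℕ) = 0
        · rw [if_pos h, if_pos ⟨h, by rw [huniv]; exact Finset.mem_univ 0⟩]
        · rw [if_neg h, if_neg (by tauto)]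
      obtain ⟨a, b, hab, hu⟩ := Finset.card_eq_two.1
        (show (Finset.univ : Finset (Fin (α v))).card = 2 by simp [h2])
      rw [Finset.card_filter, hu, Finset.sum_pair hab, hval a, hval b,
        huniv, if_pos (Finset.mem_univ t)]
      have hvab : (a : ℕ) ≠ (b : ℕ) := fun h => hab (Fin.val_injective h)
      have hat := a.isLt
      have hbt := b.isLt
      rcases fin2_cases t with rfl | rfl <;>
        rcases (by omega : (a : ℕ) = 0 ∧ (b : ℕ) = 1 ∨ (a : ℕ) = 1 ∧ (b : ℕ) = 0)
          with ⟨h1', h2'⟩ | ⟨h1', h2'⟩ <;>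
        rw [h1', h2'] <;> decide
  · have hres : res α c κ v = ∅ := by rw [res_apply, if_neg hin]
    rw [hres]
    simp only [Finset.notMem_empty, if_false]
    rw [Finset.card_eq_zero, Finset.filter_eq_empty_iff]
    rintro i - ⟨h1, -⟩
    exact hin ⟨i, h1⟩

lemma chi_count {κ : V → Finset (Fin 2)} (hκ : ProperMulti F α κ)
    (c : (clanGraph F α).ConnectedComponent) (t : Fin 2) :
    (Finset.univ.filter fun w : Σ v : V, Fin (α v) =>
        (clanGraph F α).connectedComponentMk w = c ∧ chi α κ w = t).card
      = wt t (res α c κ) := by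
  have hsig : (Finset.univ.filter fun w : Σ v : V, Fin (α v) =>
        (clanGraph F α).connectedComponentMk w = c ∧ chi α κ w = t)
      = Finset.univ.sigma (fun v : V => Finset.univ.filter fun i : Fin (α v) =>
        (clanGraph F α).connectedComponentMk ⟨v, i⟩ = c ∧ chi α κ ⟨v, i⟩ = t) := by
    ext ⟨v, i⟩
    simp [Finset.mem_sigma]
  rw [hsig, Finset.card_sigma]
  have : ∀ v, (Finset.univ.filter fun i : Fin (α v) =>
      (clanGraph F α).connectedComponentMk ⟨v, i⟩ = c ∧ chi α κ ⟨v, i⟩ = t).card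
      = if t ∈ res α c κ v then 1 else 0 := count_fiber hκ c t
  rw [Finset.sum_congr rfl (fun v _ => this v)]
  rw [wt, Finset.card_filter]

/-! ### Xpoly of an induced component -/

lemma reach_induce {c : (clanGraph F α).ConnectedComponent} :
    ∀ {a b : Σ v : V, Fin (α v)} (p : (clanGraph F α).Walk a b)
      (ha : (clanGraph F α).connectedComponentMk a = c)
      (hb : (clanGraph F α).connectedComponentMk b = c),
    ((clanGraph F α).induce {w | (clanGraph F α).connectedComponentMk w = c}).Reachable
      ⟨a, ha⟩ ⟨b, hb⟩ := by
  intro a b p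
  induction p with
  | nil => intro ha hb; rfl
  | @cons a x b h p ih =>
    intro ha hb
    have hx : (clanGraph F α).connectedComponentMk x = c :=
      (ConnectedComponent.connectedComponentMk_eq_of_adj h).symm.trans ha
    have hadj : ((clanGraph F α).induce
        {w | (clanGraph F α).connectedComponentMk w = c}).Adj ⟨a, ha⟩ ⟨x, hx⟩ := h
    exact hadj.reachable.trans (ih hx hb)

lemma subtype_count {κ : V → Finset (Fin 2)} (c : (clanGraph F α).ConnectedComponent)
    (t : Fin 2) :
    (Finset.univ.filter fun w : {w : Σ v : V, Fin (α v) //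
        (clanGraph F α).connectedComponentMk w = c} => chi α κ w.1 = t).card
      = (Finset.univ.filter fun w : Σ v : V, Fin (α v) =>
          (clanGraph F α).connectedComponentMk w = c ∧ chi α κ w = t).card := by
  apply Finset.card_bij (fun w _ => w.1)
  · intro w hw
    rw [Finset.mem_filter] at hw ⊢
    exact ⟨Finset.mem_univ _, w.2, hw.2⟩
  · intro w _ w' _ h
    exact Subtype.ext h
  · intro w hw
    rw [Finset.mem_filter] at hw
    exact ⟨⟨w, hw.2.1⟩, Finset.mem_filter.2 ⟨Finset.mem_univ _, hw.2.2⟩, rfl⟩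

lemma fin2_mem_single_zero : ∀ x : Fin 2, ((0 : Fin 2) ∈ ({x} : Finset (Fin 2))) ↔ x = 0 := by
  decide
lemma fin2_mem_single_one : ∀ x : Fin 2, ((1 : Fin 2) ∈ ({x} : Finset (Fin 2))) ↔ x = 1 := by
  decide
lemma fin2_mem_single_flip_zero : ∀ x : Fin 2,
    ((0 : Fin 2) ∈ ({σc x} : Finset (Fin 2))) ↔ x = 1 := by decide
lemma fin2_mem_single_flip_one : ∀ x : Fin 2,
    ((1 : Fin 2) ∈ ({σc x} : Finset (Fin 2))) ↔ x = 0 := by decide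

lemma Xpoly_comp {κs : V → Finset (Fin 2)} (hκs : κs ∈ KK F α)
    (c : (clanGraph F α).ConnectedComponent) :
    Xpoly ((clanGraph F α).induce
        {w : Σ v : V, Fin (α v) | (clanGraph F α).connectedComponentMk w = c}) (fun _ => 1)
      = term (wt 0 (res α c κs)) (wt 1 (res α c κs))
        + term (wt 1 (res α c κs)) (wt 0 (res α c κs)) := by
  have hκs' := mem_KK.1 hκs
  set S : Set (Σ v : V, Fin (α v)) :=
    {w : Σ v : V, Fin (α v) | (clanGraph F α).connectedComponentMk w = c} with hS
  set H := (clanGraph F α).induce S with hH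
  set κh0 : ↥S → Finset (Fin 2) := fun w => {chi α κs w.1} with hκh0
  set κh1 : ↥S → Finset (Fin 2) := fun w => {σc (chi α κs w.1)} with hκh1
  have hmemS : ∀ w : ↥S, (clanGraph F α).connectedComponentMk w.1 = c := fun w => w.2
  have hadjG : ∀ {u w : ↥S}, H.Adj u w → (clanGraph F α).Adj u.1 w.1 := fun h => h
  have h0 : ProperMulti H (fun _ => 1) κh0 := by
    constructor
    · intro w; rw [hκh0]; exact Finset.card_singleton _
    · intro u w h
      exact fin2_singleton_inter (chi_proper hκs' (hadjG h))
  have h1 : ProperMulti H (fun _ => 1) κh1 := by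
    constructor
    · intro w; rw [hκh1]; exact Finset.card_singleton _
    · intro u w h
      refine fin2_singleton_inter (fun he => chi_proper hκs' (hadjG h) ?_)
      have : ∀ x y : Fin 2, σc x = σc y → x = y := by decide
      exact this _ _ he
  have hflip01 : ∀ w, κh1 w = flipF (κh0 w) := by
    intro w
    rw [hκh0, hκh1, flipF_singleton]
  obtain ⟨abase, habase⟩ := Quot.exists_rep c
  have habase' : abase ∈ S := habase
  have huniq : ∀ κh, ProperMulti H (fun _ => 1) κh → κh = κh0 ∨ κh = κh1 := by
    intro κh hκh
    have hreach : ∀ w : ↥S, H.Reachable ⟨abase, habase'⟩ w := by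
      intro w
      obtain ⟨p⟩ : (clanGraph F α).Reachable abase w.1 :=
        ConnectedComponent.exact (habase.trans (hmemS w).symm)
      exact reach_induce p habase' (hmemS w)
    rcases fin2_dichot (s := κh0 ⟨abase, habase'⟩) (t := κh ⟨abase, habase'⟩)
        (by rw [hκh.1, h0.1]) with hd | hd
    · left
      funext w
      obtain ⟨p⟩ := hreach w
      exact (propagate1 h0 hκh p).1 hd
    · right
      funext w
      obtain ⟨p⟩ := hreach w
      rw [hflip01 w]
      exact (propagate1 h0 hκh p).2 hd
  have hne : κh0 ≠ κh1 := by
    intro he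
    have := congrFun he ⟨abase, habase'⟩
    rw [hκh0, hκh1] at this
    exact fin2_ne_flip _ (Finset.singleton_injective this)
  -- now compute the Xpoly
  rw [Xpoly, finsum_eq_sum_of_fintype]
  have huniv : (Finset.univ : Finset {κ : ↥S → Finset (Fin 2) //
      ProperMulti H (fun _ => 1) κ}) = {⟨κh0, h0⟩, ⟨κh1, h1⟩} := by
    ext x
    simp only [Finset.mem_univ, true_iff, Finset.mem_insert, Finset.mem_singleton]
    rcases huniq x.1 x.2 with h | h
    · left; exact Subtype.ext h
    · right; exact Subtype.ext h
  rw [huniv, Finset.sum_pair (fun he => hne (congrArg Subtype.val he))]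
  have hcount0 : ∀ t : Fin 2,
      (Finset.univ.filter fun w : ↥S => t ∈ κh0 w).card = wt t (res α c κs) := by
    intro t
    rw [← chi_count hκs' c t, ← subtype_count c t]
    congr 1
    apply Finset.filter_congr
    intro w _
    rw [hκh0]
    rcases fin2_cases t with rfl | rfl
    · rw [fin2_mem_single_zero]
    · rw [fin2_mem_single_one]
  have hcount1 : ∀ t : Fin 2,
      (Finset.univ.filter fun w : ↥S => t ∈ κh1 w).card = wt (σc t) (res α c κs) := by
    intro t
    rw [← chi_count hκs' c (σc t), ← subtype_count c (σc t)]
    congr 1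
    apply Finset.filter_congr
    intro w _
    rw [hκh1]
    rcases fin2_cases t with rfl | rfl
    · rw [fin2_mem_single_flip_zero]
      show _ ↔ chi α κs w.1 = σc 0
      rw [show σc 0 = (1 : Fin 2) from rfl]
    · rw [fin2_mem_single_flip_one]
      show _ ↔ chi α κs w.1 = σc 1
      rw [show σc 1 = (0 : Fin 2) from rfl]
  show term _ _ + term _ _ = _
  rw [hcount0 0, hcount0 1, hcount1 0, hcount1 1,
    show σc 0 = (1 : Fin 2) from rfl, show σc 1 = (0 : Fin 2) from rfl]

/-! ### weights of the special components -/

lemma C_weights {κs : V → Finset (Fin 2)} (hκs : ProperMulti F α κs)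
    {C : (clanGraph F α).ConnectedComponent} {A B : Finset (Σ v : V, Fin (α v))} {r : ℕ}
    (hcover : ∀ w : Σ v : V, Fin (α v),
      w ∈ A ∪ B ↔ (clanGraph F α).connectedComponentMk w = C)
    (hdisj : Disjoint A B) (hAcard : A.card = r + 2) (hBcard : B.card = r)
    (hAind : ∀ u ∈ A, ∀ w ∈ A, ¬ (clanGraph F α).Adj u w)
    (hBind : ∀ u ∈ B, ∀ w ∈ B, ¬ (clanGraph F α).Adj u w) :
    (wt 0 (res α C κs) = r + 2 ∧ wt 1 (res α C κs) = r) ∨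
      (wt 0 (res α C κs) = r ∧ wt 1 (res α C κs) = r + 2) := by
  obtain ⟨a0, ha0⟩ := Finset.card_pos.1 (show 0 < A.card by omega)
  have hmkA : ∀ w ∈ A, (clanGraph F α).connectedComponentMk w = C :=
    fun w hw => (hcover w).1 (Finset.mem_union_left _ hw)
  have hmkB : ∀ w ∈ B, (clanGraph F α).connectedComponentMk w = C :=
    fun w hw => (hcover w).1 (Finset.mem_union_right _ hw)
  have inv : ∀ {x y : Σ v : V, Fin (α v)} (p : (clanGraph F α).Walk x y),
      ((x ∈ A ∧ chi α κs x = chi α κs a0) ∨ (x ∈ B ∧ chi α κs x = σc (chi α κs a0))) →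
      ((y ∈ A ∧ chi α κs y = chi α κs a0) ∨ (y ∈ B ∧ chi α κs y = σc (chi α κs a0))) := by
    intro x y p
    induction p with
    | nil => exact id
    | @cons x x' y h p ih =>
      intro hx
      apply ih
      have hmkx' : (clanGraph F α).connectedComponentMk x' = C := by
        rcases hx with ⟨hxA, -⟩ | ⟨hxB, -⟩
        · exact (ConnectedComponent.connectedComponentMk_eq_of_adj h).symm.trans (hmkA x hxA)
        · exact (ConnectedComponent.connectedComponentMk_eq_of_adj h).symm.trans (hmkB x hxB)
      have hx'AB := (hcover x').2 hmkx'
      have hchi : chi α κs x' = σc (chi α κs x) := fin2_of_ne (chi_proper hκs h)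
      rcases hx with ⟨hxA, hcx⟩ | ⟨hxB, hcx⟩
      · right
        have hx'B : x' ∈ B := by
          rcases Finset.mem_union.1 hx'AB with h' | h'
          · exact absurd h (hAind x hxA x' h')
          · exact h'
        exact ⟨hx'B, by rw [hchi, hcx]⟩
      · left
        have hx'A : x' ∈ A := by
          rcases Finset.mem_union.1 hx'AB with h' | h'
          · exact h'
          · exact absurd h (hBind x hxB x' h')
        exact ⟨hx'A, by rw [hchi, hcx, sigma_invol]⟩
  have hall : ∀ w : Σ v : V, Fin (α v), (clanGraph F α).connectedComponentMk w = C →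
      ((w ∈ A ∧ chi α κs w = chi α κs a0) ∨ (w ∈ B ∧ chi α κs w = σc (chi α κs a0))) := by
    intro w hw
    obtain ⟨p⟩ : (clanGraph F α).Reachable a0 w :=
      ConnectedComponent.exact ((hmkA a0 ha0).trans hw.symm)
    exact inv p (Or.inl ⟨ha0, rfl⟩)
  have hfA : (Finset.univ.filter fun w : Σ v : V, Fin (α v) =>
      (clanGraph F α).connectedComponentMk w = C ∧ chi α κs w = chi α κs a0) = A := by
    ext w
    rw [Finset.mem_filter]
    constructor
    · rintro ⟨-, hmk, hc⟩
      rcases hall w hmk with ⟨hA, -⟩ | ⟨-, hB⟩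
      · exact hA
      · exact absurd (hc.symm.trans hB) (fin2_ne_flip _)
    · intro hw
      refine ⟨Finset.mem_univ _, hmkA w hw, ?_⟩
      rcases hall w (hmkA w hw) with ⟨-, hc⟩ | ⟨hB, -⟩
      · exact hc
      · exact absurd hB (Finset.disjoint_left.1 hdisj hw)
  have hfB : (Finset.univ.filter fun w : Σ v : V, Fin (α v) =>
      (clanGraph F α).connectedComponentMk w = C ∧ chi α κs w = σc (chi α κs a0)) = B := by
    ext w
    rw [Finset.mem_filter]
    constructor
    · rintro ⟨-, hmk, hc⟩
      rcases hall w hmk with ⟨-, hA⟩ | ⟨hB, -⟩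
      · exact absurd (hA.symm.trans hc) (fin2_ne_flip _)
      · exact hB
    · intro hw
      refine ⟨Finset.mem_univ _, hmkB w hw, ?_⟩
      rcases hall w (hmkB w hw) with ⟨hA, -⟩ | ⟨-, hc⟩
      · exact absurd hw (Finset.disjoint_left.1 hdisj hA)
      · exact hc
  have hwA : wt (chi α κs a0) (res α C κs) = r + 2 := by
    rw [← chi_count hκs C (chi α κs a0), hfA, hAcard]
  have hwB : wt (σc (chi α κs a0)) (res α C κs) = r := by
    rw [← chi_count hκs C (σc (chi α κs a0)), hfB, hBcard]
  rcases fin2_cases (chi α κs a0) with h | h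
  · left
    rw [h] at hwA hwB
    exact ⟨hwA, hwB⟩
  · right
    rw [h] at hwA hwB
    exact ⟨hwB, hwA⟩

lemma gpoly_C {κs : V → Finset (Fin 2)} (hκs : κs ∈ KK F α)
    {C : (clanGraph F α).ConnectedComponent} {A B : Finset (Σ v : V, Fin (α v))} {r : ℕ}
    (hcover : ∀ w : Σ v : V, Fin (α v),
      w ∈ A ∪ B ↔ (clanGraph F α).connectedComponentMk w = C)
    (hdisj : Disjoint A B) (hAcard : A.card = r + 2) (hBcard : B.card = r)
    (hAind : ∀ u ∈ A, ∀ w ∈ A, ¬ (clanGraph F α).Adj u w)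
    (hBind : ∀ u ∈ B, ∀ w ∈ B, ¬ (clanGraph F α).Adj u w) :
    gpoly F α C = term (r+2) r + term r (r+2) := by
  have hw := C_weights (mem_KK.1 hκs) hcover hdisj hAcard hBcard hAind hBind
  rcases gpoly_shape hκs C with h | ⟨heq, -⟩
  · rcases hw with ⟨h0, h1⟩ | ⟨h0, h1⟩
    · rw [h, h0, h1]
    · rw [h, h0, h1, add_comm]
  · rcases hw with ⟨h0, h1⟩ | ⟨h0, h1⟩ <;> omega

lemma isolated_eq {z : Σ v : V, Fin (α v)} (hz : ∀ w', ¬ (clanGraph F α).Adj z w') :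
    ∀ w, (clanGraph F α).connectedComponentMk w = (clanGraph F α).connectedComponentMk z
      → w = z := by
  intro w h
  obtain ⟨p⟩ : (clanGraph F α).Reachable z w := (ConnectedComponent.exact h).symm
  cases p with
  | nil => rfl
  | cons h' _ => exact absurd h' (hz _)

lemma gpoly_isolated {κs : V → Finset (Fin 2)} (hκs : κs ∈ KK F α)
    {z : Σ v : V, Fin (α v)} (hz : ∀ w', ¬ (clanGraph F α).Adj z w') :
    gpoly F α ((clanGraph F α).connectedComponentMk z) = term 1 0 + term 0 1 := by
  set c0 := (clanGraph F α).connectedComponentMk z with hc0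
  have hfilter : ∀ t : Fin 2, (Finset.univ.filter fun w : Σ v : V, Fin (α v) =>
      (clanGraph F α).connectedComponentMk w = c0 ∧ chi α κs w = t)
      = if chi α κs z = t then {z} else ∅ := by
    intro t
    split
    · rename_i ht
      ext w
      rw [Finset.mem_filter, Finset.mem_singleton]
      constructor
      · rintro ⟨-, h1, -⟩
        exact isolated_eq hz w h1
      · rintro rfl
        exact ⟨Finset.mem_univ _, rfl, ht⟩
    · rename_i ht
      rw [Finset.filter_eq_empty_iff]
      rintro w - ⟨h1, h2⟩
      rw [isolated_eq hz w h1] at h2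
      exact ht h2
  have hwt : ∀ t : Fin 2, wt t (res α c0 κs) = if chi α κs z = t then 1 else 0 := by
    intro t
    rw [← chi_count (mem_KK.1 hκs) c0 t, hfilter t]
    split
    · exact Finset.card_singleton _
    · exact Finset.card_empty
  rcases gpoly_shape hκs c0 with h | ⟨heq, -⟩
  · rw [h, hwt 0, hwt 1]
    rcases fin2_cases (chi α κs z) with hx | hx <;> rw [hx]
    · rw [if_pos rfl, if_neg (by decide)]
    · rw [if_neg (by decide), if_pos rfl, add_comm]
  · rw [hwt 0, hwt 1] at heq
    rcases fin2_cases (chi α κs z) with hx | hx <;> rw [hx] at heq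
    · rw [if_pos rfl, if_neg (by decide)] at heq
      omega
    · rw [if_neg (by decide), if_pos rfl] at heq
      omega

end Graph




end ClanAux

open scoped Classical in
/-- Let `F` be a finite forest, `α : V(F) → ℕ`, and suppose the clan graph `F^α`
has a connected component `C` that is bipartite with parts of sizes `r+2` and `r`
for some `r ≥ 1`, that the two-variable chromatic symmetric function of every other
connected component of `F^α` is 2-s-positive, and that `X_F^α` is not 2-s-positive.
Then `F^α` has no isolated vertices. -/
theorem clanGraph_no_isolated_vertices {V : Type} [Fintype V] [DecidableEq V]
    (F : SimpleGraph V) (hF : F.IsAcyclic) (α : V → ℕ) (r : ℕ) (hr : 1 ≤ r)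
    (C : (clanGraph F α).ConnectedComponent)
    (A B : Finset (Σ v : V, Fin (α v)))
    (hcover : ∀ w : Σ v : V, Fin (α v),
      w ∈ A ∪ B ↔ (clanGraph F α).connectedComponentMk w = C)
    (hdisj : Disjoint A B) (hAcard : A.card = r + 2) (hBcard : B.card = r)
    (hAind : ∀ u ∈ A, ∀ w ∈ A, ¬ (clanGraph F α).Adj u w)
    (hBind : ∀ u ∈ B, ∀ w ∈ B, ¬ (clanGraph F α).Adj u w)
    (hother : ∀ C' : (clanGraph F α).ConnectedComponent, C' ≠ C →
      TwoSPos (Xpoly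
        ((clanGraph F α).induce
          {w : Σ v : V, Fin (α v) | (clanGraph F α).connectedComponentMk w = C'})
        (fun _ => 1)))
    (hneg : ¬ TwoSPos (Xpoly F α)) :
    ∀ w : Σ v : V, Fin (α v), ∃ w', (clanGraph F α).Adj w w' := by
  by_contra hcon
  push_neg at hcon
  obtain ⟨z, hz⟩ := hcon
  apply hneg
  haveI : Fintype (clanGraph F α).ConnectedComponent := Fintype.ofFinite _
  by_cases hex : ∃ κ, ProperMulti F α κ
  · obtain ⟨κs, hκs'⟩ := hex
    have hκs : κs ∈ ClanAux.KK F α := ClanAux.mem_KK.2 hκs'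
    set c0 := (clanGraph F α).connectedComponentMk z with hc0
    have hc0C : c0 ≠ C := by
      intro hEq
      obtain ⟨b, hb⟩ := Finset.card_pos.1 (show 0 < B.card by omega)
      obtain ⟨a, ha⟩ := Finset.card_pos.1 (show 0 < A.card by omega)
      have hbz : b = z := ClanAux.isolated_eq hz b
        (((hcover b).1 (Finset.mem_union_right _ hb)).trans hEq.symm)
      have haz : a = z := ClanAux.isolated_eq hz a
        (((hcover a).1 (Finset.mem_union_left _ ha)).trans hEq.symm)
      exact absurd (haz.trans hbz.symm ▸ hb) (Finset.disjoint_left.1 hdisj ha)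
    have hCw : ClanAux.gpoly F α C = ClanAux.term (r+2) r + ClanAux.term r (r+2) :=
      ClanAux.gpoly_C hκs hcover hdisj hAcard hBcard hAind hBind
    have hc0w : ClanAux.gpoly F α c0 = ClanAux.term 1 0 + ClanAux.term 0 1 :=
      ClanAux.gpoly_isolated hκs hz
    have hshape : ∀ c ∈ (Finset.univ.erase C).erase c0, ∃ u q,
        (u = q ∨ u = q + 1 ∨ q = u + 1) ∧
        (ClanAux.gpoly F α c = ClanAux.term u q + ClanAux.term q u ∨
          ClanAux.gpoly F α c = ClanAux.term u u) := by
      intro c hc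
      have hcC : c ≠ C := (Finset.mem_erase.1 (Finset.mem_erase.1 hc).2).1
      rcases ClanAux.gpoly_shape hκs c with h | ⟨heq, h⟩
      · refine ⟨ClanAux.wt 0 (ClanAux.res α c κs), ClanAux.wt 1 (ClanAux.res α c κs),
          ?_, Or.inl h⟩
        have hpos := hother c hcC
        rw [ClanAux.Xpoly_comp hκs c] at hpos
        exact ClanAux.balance_of_pos hpos
      · exact ⟨ClanAux.wt 0 (ClanAux.res α c κs), ClanAux.wt 0 (ClanAux.res α c κs),
          Or.inl rfl, Or.inr h⟩
    rw [ClanAux.Xpoly_prod,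
      ← Finset.mul_prod_erase Finset.univ _ (Finset.mem_univ C),
      ← Finset.mul_prod_erase (Finset.univ.erase C) _
        (Finset.mem_erase.2 ⟨hc0C, Finset.mem_univ c0⟩),
      ← mul_assoc, hCw, hc0w]
    exact (ClanAux.prod_shape _ _ hshape (ClanAux.baseCC r).1 (ClanAux.baseCC r).2).2
  · have hKempty : ClanAux.KK F α = ∅ := by
      rw [ClanAux.KK, Finset.filter_eq_empty_iff]
      intro κ _
      exact fun h => hex ⟨κ, h⟩
    rw [ClanAux.Xpoly_eq_sum, hKempty, Finset.sum_empty]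
    exact ClanAux.TwoSPos_zero
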